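/- Fix k ∈ ℕ and define T : ℓᵖ(ℕ) → ℓᵖ(ℕ) by (Tf)(n) = f(⌊n/k⌋) for n ≥ k and (Tf)(n) = 0 for n < k. Then T is a bounded linear operator with ‖T‖ = k^{1/p}, and T preserves majorization. -/

import Mathlib

open scoped ENNReal

/-- The standard basis element `e i` of `ℓᵖ(I)`. -/
noncomputable def stdb (p : ℝ≥0∞) {I : Type*} (i : I) : lp (fun _ : I => ℝ) p :=
  letI := Classical.decEq I
  lp.single p i 1

/-- A bounded linear operator `A : ℓᵖ(J) → ℓᵖ(I)` is positive if `A f ≥ 0` whenever `f ≥ 0`. -/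
def IsPositiveOp {I J : Type*} {p : ℝ≥0∞} [Fact (1 ≤ p)]
    (A : lp (fun _ : J => ℝ) p →L[ℝ] lp (fun _ : I => ℝ) p) : Prop :=
  ∀ f : lp (fun _ : J => ℝ) p, (∀ j, 0 ≤ f j) → ∀ i, 0 ≤ A f i

/-- Row stochastic: positive and each row sum `∑_j ⟨A e_j, e_i⟩` equals 1. -/
def IsRowStochastic {I J : Type*} {p : ℝ≥0∞} [Fact (1 ≤ p)]
    (A : lp (fun _ : J => ℝ) p →L[ℝ] lp (fun _ : I => ℝ) p) : Prop :=
  IsPositiveOp A ∧ ∀ i : I, HasSum (fun j : J => A (stdb p j) i) 1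

/-- Column stochastic: positive and each column sum `∑_i ⟨A e_j, e_i⟩` equals 1. -/
def IsColumnStochastic {I J : Type*} {p : ℝ≥0∞} [Fact (1 ≤ p)]
    (A : lp (fun _ : J => ℝ) p →L[ℝ] lp (fun _ : I => ℝ) p) : Prop :=
  IsPositiveOp A ∧ ∀ j : J, HasSum (fun i : I => A (stdb p j) i) 1

/-- Doubly stochastic: both row and column stochastic. -/
def IsDoublyStochastic {I J : Type*} {p : ℝ≥0∞} [Fact (1 ≤ p)]
    (A : lp (fun _ : J => ℝ) p →L[ℝ] lp (fun _ : I => ℝ) p) : Prop :=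
  IsRowStochastic A ∧ IsColumnStochastic A

/-- `f ≺ g` : `f` is majorized by `g`, i.e. `f = D g` for some doubly stochastic `D`. -/
def Majorized {I : Type*} {p : ℝ≥0∞} [Fact (1 ≤ p)]
    (f g : lp (fun _ : I => ℝ) p) : Prop :=
  ∃ D : lp (fun _ : I => ℝ) p →L[ℝ] lp (fun _ : I => ℝ) p,
    IsDoublyStochastic D ∧ f = D g

/-- `T` preserves majorization if `f ≺ g` implies `T f ≺ T g`. -/
def PreservesMajorization {I : Type*} {p : ℝ≥0∞} [Fact (1 ≤ p)]
    (T : lp (fun _ : I => ℝ) p →L[ℝ] lp (fun _ : I => ℝ) p) : Prop :=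
  ∀ f g : lp (fun _ : I => ℝ) p, Majorized f g → Majorized (T f) (T g)

namespace S15

set_option linter.unusedSectionVars false

abbrev PN : Type := {n : ℕ // 0 < n}

variable {p : ℝ≥0∞} [Fact (1 ≤ p)]

abbrev LP (p : ℝ≥0∞) := lp (fun _ : PN => ℝ) p

lemma stdb_eq_single {I : Type*} [inst : DecidableEq I] (j : I) :
    (stdb p j : lp (fun _ : I => ℝ) p) = lp.single p j 1 := by
  unfold stdb
  show @lp.single I _ _ (Classical.decEq I) p j 1 = @lp.single I _ _ inst p j 1
  rw [Subsingleton.elim (Classical.decEq I) inst]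

lemma stdb_apply {I : Type*} [DecidableEq I] (j i : I) : stdb p j i = if i = j then 1 else 0 := by
  rw [stdb_eq_single]
  rcases eq_or_ne i j with rfl | h
  · rw [if_pos rfl]; exact lp.single_apply_self p i 1
  · rw [if_neg h]; exact lp.single_apply_ne p j 1 h

lemma norm_stdb {I : Type*} [DecidableEq I] (hq : 0 < p.toReal) (j : I) : ‖stdb p j‖ = 1 := by
  have hsum : HasSum (fun i : I => ‖stdb p j i‖ ^ p.toReal) 1 := by
    refine (hasSum_ite_eq j (1 : ℝ)).congr_fun fun i => ?_
    rcases eq_or_ne i j with rfl | h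
    · simp [stdb_apply]
    · simp [stdb_apply, h, Real.zero_rpow hq.ne']
  have h1 : (0:ℝ) ≤ ‖stdb p j‖ := lp.norm_nonneg' _
  refine Real.rpow_left_injOn hq.ne' h1 (Set.mem_setOf_eq ▸ zero_le_one) ?_
  simp only [Set.mem_setOf_eq, Real.one_rpow]
  exact (lp.hasSum_norm hq _).unique hsum

/-! ### Generic composition operator along a partial injection -/

lemma sum_cmap_le (hq : 0 < p.toReal) (σ : PN → Option PN)
    (hσ : ∀ ⦃a b j⦄, σ a = some j → σ b = some j → a = b)
    (f : LP p) (s : Finset PN) :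
    ∑ i ∈ s, ‖(σ i).elim 0 ⇑f‖ ^ p.toReal ≤ ‖f‖ ^ p.toReal := by
  classical
  set F : PN → ℝ := fun i => ‖(σ i).elim 0 ⇑f‖ ^ p.toReal with hF
  set s' := s.filter (fun i => (σ i).isSome) with hs'
  have hsum : ∑ i ∈ s, F i = ∑ i ∈ s', F i := by
    refine (Finset.sum_filter_of_ne ?_).symm
    intro i hi hFi
    cases h : σ i with
    | none => exact absurd (by simp [F, h, Real.zero_rpow hq.ne']) hFi
    | some j => simp [h]
  set g : PN → PN := fun i => (σ i).elim i id with hg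
  have hginj : ∀ a ∈ s', ∀ b ∈ s', g a = g b → a = b := by
    intro a ha b hb hab
    rcases Option.isSome_iff_exists.1 (Finset.mem_filter.1 ha).2 with ⟨ja, hja⟩
    rcases Option.isSome_iff_exists.1 (Finset.mem_filter.1 hb).2 with ⟨jb, hjb⟩
    have : ja = jb := by simpa [g, hja, hjb] using hab
    exact hσ hja (this ▸ hjb)
  have himg : ∑ i ∈ s', F i = ∑ j ∈ s'.image g, ‖f j‖ ^ p.toReal := by
    rw [Finset.sum_image hginj]
    refine Finset.sum_congr rfl ?_
    intro i hi
    rcases Option.isSome_iff_exists.1 (Finset.mem_filter.1 hi).2 with ⟨j, hj⟩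
    simp [F, g, hj]
  calc ∑ i ∈ s, F i = ∑ j ∈ s'.image g, ‖f j‖ ^ p.toReal := by rw [hsum, himg]
    _ ≤ ‖f‖ ^ p.toReal := lp.sum_rpow_le_norm_rpow hq f _

lemma memℓp_cmap (hq : 0 < p.toReal) (σ : PN → Option PN)
    (hσ : ∀ ⦃a b j⦄, σ a = some j → σ b = some j → a = b) (f : LP p) :
    Memℓp (fun i => (σ i).elim 0 ⇑f) p :=
  memℓp_gen' (sum_cmap_le hq σ hσ f)

noncomputable def cOp (hq : 0 < p.toReal) (σ : PN → Option PN)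
    (hσ : ∀ ⦃a b j⦄, σ a = some j → σ b = some j → a = b) : LP p →L[ℝ] LP p :=
  LinearMap.mkContinuous
    { toFun := fun f => ⟨fun i => (σ i).elim 0 ⇑f, memℓp_cmap hq σ hσ f⟩
      map_add' := fun f g => by
        ext i
        show (σ i).elim 0 ⇑(f + g) = (σ i).elim 0 ⇑f + (σ i).elim 0 ⇑g
        cases σ i
        · exact (add_zero (0 : ℝ)).symm
        · rfl
      map_smul' := fun c f => by
        ext i
        cases h : σ i <;> simp [h, lp.coeFn_smul] }
    1 (fun f => by
      rw [one_mul]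
      exact lp.norm_le_of_forall_sum_le hq (norm_nonneg f) (fun s => sum_cmap_le hq σ hσ f s))

lemma cOp_apply (hq : 0 < p.toReal) (σ : PN → Option PN)
    (hσ : ∀ ⦃a b j⦄, σ a = some j → σ b = some j → a = b) (f : LP p) (i : PN) :
    cOp hq σ hσ f i = (σ i).elim 0 ⇑f := rfl

/-! ### The specific maps -/

variable (k : ℕ) (hk : 0 < k)

def φ (r : ℕ) (m : PN) : PN := ⟨k * m.1 + r, Nat.add_pos_left (Nat.mul_pos hk m.2) r⟩

lemma φ_inj (r : ℕ) : Function.Injective (φ k hk r) := by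
  intro a b h
  have h1 : k * a.1 + r = k * b.1 + r := congrArg Subtype.val h
  exact Subtype.ext (Nat.eq_of_mul_eq_mul_left hk (Nat.add_right_cancel h1))

lemma φ_le (r : ℕ) (m : PN) : k ≤ (φ k hk r m).1 :=
  le_trans (Nat.le_mul_of_pos_right k m.2) (Nat.le_add_right _ _)

lemma φ_mod {r : ℕ} (hr : r < k) (m : PN) : (φ k hk r m).1 % k = r := by
  show (k * m.1 + r) % k = r
  rw [Nat.mul_add_mod, Nat.mod_eq_of_lt hr]

lemma φ_div {r : ℕ} (hr : r < k) (m : PN) : (φ k hk r m).1 / k = m.1 := by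
  show (k * m.1 + r) / k = m.1
  rw [Nat.mul_add_div hk, Nat.div_eq_of_lt hr, add_zero]

lemma φ_eq {r : ℕ} (hr : r < k) {i : PN} (h1 : k ≤ i.1) (h2 : i.1 % k = r) :
    φ k hk r ⟨i.1 / k, Nat.div_pos h1 hk⟩ = i := by
  apply Subtype.ext
  show k * (i.1 / k) + r = i.1
  rw [← h2]
  exact Nat.div_add_mod i.1 k

lemma not_mem_range_φ {r : ℕ} (hr : r < k) {i : PN} (h : i ∉ Set.range (φ k hk r)) :
    ¬(k ≤ i.1 ∧ i.1 % k = r) := by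
  rintro ⟨h1, h2⟩
  exact h ⟨_, φ_eq k hk hr h1 h2⟩

def σE (r : ℕ) (i : PN) : Option PN :=
  if h : k ≤ i.1 ∧ i.1 % k = r then some ⟨i.1 / k, Nat.div_pos h.1 hk⟩ else none

lemma σE_inj (r : ℕ) : ∀ ⦃a b j⦄, σE k hk r a = some j → σE k hk r b = some j → a = b := by
  intro a b j ha hb
  unfold σE at ha hb
  split_ifs at ha hb with h1 h2
  have ha' : a.1 / k = j.1 := congrArg Subtype.val (Option.some.inj ha)
  have hb' : b.1 / k = j.1 := congrArg Subtype.val (Option.some.inj hb)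
  apply Subtype.ext
  calc a.1 = k * (a.1 / k) + a.1 % k := (Nat.div_add_mod a.1 k).symm
    _ = k * j.1 + r := by rw [ha', h1.2]
    _ = k * (b.1 / k) + b.1 % k := by rw [hb', h2.2]
    _ = b.1 := Nat.div_add_mod b.1 k

lemma σE_φ {r : ℕ} (hr : r < k) (m : PN) : σE k hk r (φ k hk r m) = some m := by
  unfold σE
  rw [dif_pos ⟨φ_le k hk r m, φ_mod k hk hr m⟩]
  exact congrArg some (Subtype.ext (φ_div k hk hr m))

lemma σE_none' {r : ℕ} {i : PN} (h : ¬(k ≤ i.1 ∧ i.1 % k = r)) : σE k hk r i = none :=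
  dif_neg h

lemma σE_none {r : ℕ} (hr : r < k) {i : PN} (h : i ∉ Set.range (φ k hk r)) :
    σE k hk r i = none :=
  dif_neg (not_mem_range_φ k hk hr h)

def σS (r : ℕ) (m : PN) : Option PN := some (φ k hk r m)

lemma σS_inj (r : ℕ) : ∀ ⦃a b j⦄, σS k hk r a = some j → σS k hk r b = some j → a = b := by
  intro a b j ha hb
  exact φ_inj k hk r ((Option.some.inj ha).trans (Option.some.inj hb).symm)

def σP (i : PN) : Option PN := if i.1 < k then some i else none

lemma σP_inj : ∀ ⦃a b j⦄, σP k a = some j → σP k b = some j → a = b := by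
  intro a b j ha hb
  unfold σP at ha hb
  split_ifs at ha hb
  exact (Option.some.inj ha).trans (Option.some.inj hb).symm

/-! ### The operators -/

variable (hq : 0 < p.toReal)

noncomputable def Eop (r : ℕ) : LP p →L[ℝ] LP p := cOp hq (σE k hk r) (σE_inj k hk r)

noncomputable def Sop (r : ℕ) : LP p →L[ℝ] LP p := cOp hq (σS k hk r) (σS_inj k hk r)

noncomputable def Pop : LP p →L[ℝ] LP p := cOp hq (σP k) (σP_inj k)

noncomputable def Top : LP p →L[ℝ] LP p := ∑ r ∈ Finset.range k, Eop k hk hq r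

lemma Sop_apply (r : ℕ) (f : LP p) (m : PN) : Sop k hk hq r f m = f (φ k hk r m) := rfl

lemma sum_σE (F : ℕ → PN → ℝ) (i : PN) :
    ∑ r ∈ Finset.range k, (σE k hk r i).elim 0 (F r) =
      if h : k ≤ i.1 then F (i.1 % k) ⟨i.1 / k, Nat.div_pos h hk⟩ else 0 := by
  by_cases h : k ≤ i.1
  · rw [dif_pos h]
    rw [Finset.sum_eq_single_of_mem (i.1 % k) (Finset.mem_range.2 (Nat.mod_lt _ hk))]
    · rw [show σE k hk (i.1 % k) i = some ⟨i.1 / k, Nat.div_pos h hk⟩ from dif_pos ⟨h, rfl⟩]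
      rfl
    · intro r _ hne
      rw [σE_none' k hk (fun hc => hne hc.2.symm)]
      rfl
  · rw [dif_neg h]
    refine Finset.sum_eq_zero fun r _ => ?_
    rw [σE_none' k hk (fun hc => h hc.1)]
    rfl

lemma Top_apply (f : LP p) (i : PN) :
    Top k hk hq f i = if h : k ≤ i.1 then f ⟨i.1 / k, Nat.div_pos h hk⟩ else 0 := by
  have h1 : Top k hk hq f i = ∑ r ∈ Finset.range k, (σE k hk r i).elim 0 ⇑f := by
    rw [Top, ContinuousLinearMap.sum_apply, lp.coeFn_sum, Finset.sum_apply]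
    rfl
  rw [h1, sum_σE k hk (fun _ => ⇑f) i]

/-! ### Norm of T -/

lemma hasSum_Top_norm (f : LP p) :
    HasSum (fun i => ‖Top k hk hq f i‖ ^ p.toReal) ((k : ℝ) * (‖f‖ ^ p.toReal)) := by
  have hterm : ∀ r ∈ Finset.range k,
      HasSum (fun i => (σE k hk r i).elim 0 (fun m => ‖f m‖ ^ p.toReal)) (‖f‖ ^ p.toReal) := by
    intro r hr
    have hr' := Finset.mem_range.1 hr
    refine ((φ_inj k hk r).hasSum_iff ?_).1 ?_
    · intro i hi
      rw [σE_none k hk hr' hi]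
      rfl
    · refine (lp.hasSum_norm hq f).congr_fun fun m => ?_
      show (σE k hk r (φ k hk r m)).elim 0 (fun m => ‖f m‖ ^ p.toReal) = _
      rw [σE_φ k hk hr' m]
      rfl
  have hs := hasSum_sum hterm
  rw [Finset.sum_const, Finset.card_range, nsmul_eq_mul] at hs
  refine hs.congr_fun fun i => ?_
  rw [sum_σE k hk (fun _ m => ‖f m‖ ^ p.toReal) i, Top_apply]
  by_cases h : k ≤ i.1
  · rw [dif_pos h, dif_pos h]
  · rw [dif_neg h, dif_neg h, norm_zero, Real.zero_rpow hq.ne']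

lemma Top_norm_eq (f : LP p) : ‖Top k hk hq f‖ = (k : ℝ) ^ (1 / p.toReal) * ‖f‖ := by
  have h1 : ‖Top k hk hq f‖ ^ p.toReal = (k : ℝ) * (‖f‖ ^ p.toReal) :=
    (lp.hasSum_norm hq _).unique (hasSum_Top_norm k hk hq f)
  have hknn : (0:ℝ) ≤ (k : ℝ) ^ (1 / p.toReal) := Real.rpow_nonneg (Nat.cast_nonneg k) _
  have h2 : (0:ℝ) ≤ ‖Top k hk hq f‖ := lp.norm_nonneg' _
  have h3 : (0:ℝ) ≤ (k : ℝ) ^ (1 / p.toReal) * ‖f‖ := mul_nonneg hknn (norm_nonneg f)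
  refine Real.rpow_left_injOn hq.ne' h2 h3 ?_
  simp only [Set.mem_setOf_eq]
  rw [h1, Real.mul_rpow hknn (norm_nonneg f), ← Real.rpow_mul (Nat.cast_nonneg k),
    one_div_mul_cancel hq.ne', Real.rpow_one]

lemma Top_opNorm : ‖Top k hk hq‖ = (k : ℝ) ^ (1 / p.toReal) := by
  apply le_antisymm
  · exact ContinuousLinearMap.opNorm_le_bound _ (Real.rpow_nonneg (Nat.cast_nonneg k) _)
      (fun f => (Top_norm_eq k hk hq f).le)
  · have h := (Top k hk hq).le_opNorm (stdb p (⟨1, one_pos⟩ : PN))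
    rw [Top_norm_eq, norm_stdb hq, mul_one, mul_one] at h
    exact h

/-! ### Transport of doubly stochastic operators -/

noncomputable def Dop (D : LP p →L[ℝ] LP p) : LP p →L[ℝ] LP p :=
  Pop k hq + ∑ r ∈ Finset.range k, (Eop k hk hq r).comp (D.comp (Sop k hk hq r))

lemma Dop_apply (D : LP p →L[ℝ] LP p) (f : LP p) (i : PN) :
    Dop k hk hq D f i = (σP k i).elim 0 ⇑f +
      ∑ r ∈ Finset.range k, (σE k hk r i).elim 0 ⇑(D (Sop k hk hq r f)) := by
  rw [Dop, ContinuousLinearMap.add_apply, lp.coeFn_add, Pi.add_apply,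
    ContinuousLinearMap.sum_apply, lp.coeFn_sum, Finset.sum_apply]
  rfl

lemma Sop_stdb_φ (r : ℕ) (m : PN) :
    Sop k hk hq r (stdb p (φ k hk r m)) = stdb p m := by
  apply lp.ext; funext m'
  show stdb p (φ k hk r m) (φ k hk r m') = stdb p m m'
  rw [stdb_apply, stdb_apply]
  rcases eq_or_ne m' m with rfl | h
  · rw [if_pos rfl, if_pos rfl]
  · rw [if_neg (fun hc => h (φ_inj k hk r hc)), if_neg h]

lemma Sop_stdb_zero (r : ℕ) {j : PN} (h : j ∉ Set.range (φ k hk r)) :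
    Sop k hk hq r (stdb p j) = 0 := by
  apply lp.ext; funext m'
  show stdb p j (φ k hk r m') = (0 : ℝ)
  rw [stdb_apply, if_neg (fun hc => h ⟨m', hc⟩)]

lemma Dop_pos (D : LP p →L[ℝ] LP p) (hD : IsPositiveOp D) :
    IsPositiveOp (Dop k hk hq D) := by
  intro f hf i
  rw [Dop_apply]
  refine add_nonneg ?_ (Finset.sum_nonneg fun r _ => ?_)
  · unfold σP
    split_ifs
    · exact hf i
    · exact le_refl 0
  · have hS : ∀ m, 0 ≤ (Sop k hk hq r f) m := fun m => hf _
    have hDS := hD _ hS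
    cases hσ : σE k hk r i with
    | none => exact le_refl 0
    | some m => exact hDS m

lemma Dop_row (D : LP p →L[ℝ] LP p) (hD : IsDoublyStochastic D) (i : PN) :
    HasSum (fun j => Dop k hk hq D (stdb p j) i) 1 := by
  by_cases hi : k ≤ i.1
  · set r₀ := i.1 % k with hr₀def
    have hr₀ : r₀ < k := Nat.mod_lt _ hk
    set m : PN := ⟨i.1 / k, Nat.div_pos hi hk⟩ with hmdef
    have key : ∀ j, Dop k hk hq D (stdb p j) i = D (Sop k hk hq r₀ (stdb p j)) m := by
      intro j
      rw [Dop_apply]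
      have hP : (σP k i).elim 0 ⇑(stdb p j) = 0 := by
        unfold σP; rw [if_neg (not_lt.2 hi)]; rfl
      rw [hP, zero_add,
        sum_σE k hk (fun r => ⇑(D (Sop k hk hq r (stdb p j)))) i, dif_pos hi]
    refine HasSum.congr_fun ?_ key
    refine ((φ_inj k hk r₀).hasSum_iff ?_).1 ?_
    · intro j hj
      rw [Sop_stdb_zero k hk hq r₀ hj, map_zero]
      rfl
    · refine (hD.1.2 m).congr_fun fun m' => ?_
      show D (Sop k hk hq r₀ (stdb p (φ k hk r₀ m'))) m = D (stdb p m') m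
      rw [Sop_stdb_φ]
  · have key : ∀ j, Dop k hk hq D (stdb p j) i = if j = i then 1 else 0 := by
      intro j
      rw [Dop_apply, sum_σE k hk (fun r => ⇑(D (Sop k hk hq r (stdb p j)))) i,
        dif_neg hi, add_zero]
      unfold σP; rw [if_pos (not_le.1 hi)]
      show stdb p j i = _
      rw [stdb_apply]
      exact if_congr eq_comm rfl rfl
    exact (hasSum_ite_eq i (1 : ℝ)).congr_fun key

lemma Dop_col (D : LP p →L[ℝ] LP p) (hD : IsDoublyStochastic D) (j : PN) :
    HasSum (fun i => Dop k hk hq D (stdb p j) i) 1 := by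
  by_cases hj : k ≤ j.1
  · set r₀ := j.1 % k with hr₀def
    have hr₀ : r₀ < k := Nat.mod_lt _ hk
    set m₀ : PN := ⟨j.1 / k, Nat.div_pos hj hk⟩ with hm₀def
    have hjφ : φ k hk r₀ m₀ = j := φ_eq k hk hr₀ hj rfl
    have hS0 : Sop k hk hq r₀ (stdb p j) = stdb p m₀ := by
      rw [← hjφ, Sop_stdb_φ]
    have key : ∀ i, Dop k hk hq D (stdb p j) i =
        (σE k hk r₀ i).elim 0 ⇑(D (stdb p m₀)) := by
      intro i
      rw [Dop_apply]
      have hP : (σP k i).elim 0 ⇑(stdb p j) = 0 := by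
        unfold σP
        split_ifs with h
        · show stdb p j i = 0
          rw [stdb_apply, if_neg]
          rintro rfl
          exact absurd hj (not_le.2 h)
        · rfl
      rw [hP, zero_add]
      rw [Finset.sum_eq_single_of_mem r₀ (Finset.mem_range.2 hr₀)]
      · rw [hS0]
      · intro r hr hne
        have hjr : j ∉ Set.range (φ k hk r) := by
          rintro ⟨m, rfl⟩
          exact hne (by rw [hr₀def, φ_mod k hk (Finset.mem_range.1 hr) m])
        rw [Sop_stdb_zero k hk hq r hjr, map_zero]
        cases hσ : σE k hk r i with
        | none => rfl
        | some m' => rfl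
    refine HasSum.congr_fun ?_ key
    refine ((φ_inj k hk r₀).hasSum_iff ?_).1 ?_
    · intro i hi
      rw [σE_none k hk hr₀ hi]
      rfl
    · refine (hD.2.2 m₀).congr_fun fun m' => ?_
      show (σE k hk r₀ (φ k hk r₀ m')).elim 0 ⇑(D (stdb p m₀)) = _
      rw [σE_φ k hk hr₀]
      rfl
  · have hS : ∀ r, Sop k hk hq r (stdb p j) = 0 := by
      intro r
      refine Sop_stdb_zero k hk hq r ?_
      rintro ⟨m, rfl⟩
      exact hj (φ_le k hk r m)
    have key : ∀ i, Dop k hk hq D (stdb p j) i = if i = j then 1 else 0 := by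
      intro i
      rw [Dop_apply]
      rw [Finset.sum_eq_zero (fun r _ => by
        rw [hS r, map_zero]
        cases hσ : σE k hk r i with
        | none => rfl
        | some m' => rfl)]
      rw [add_zero]
      unfold σP
      by_cases h : i.1 < k
      · rw [if_pos h]
        show stdb p j i = _
        rw [stdb_apply]
      · rw [if_neg h]
        show (0 : ℝ) = _
        rw [if_neg]
        rintro rfl
        exact h (not_le.1 hj)
    exact (hasSum_ite_eq j (1 : ℝ)).congr_fun key

lemma Top_transport (D : LP p →L[ℝ] LP p) (g : LP p) :
    Top k hk hq (D g) = Dop k hk hq D (Top k hk hq g) := by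
  have hTS : ∀ r, r < k → Sop k hk hq r (Top k hk hq g) = g := by
    intro r hr
    apply lp.ext; funext m
    show Top k hk hq g (φ k hk r m) = g m
    rw [Top_apply, dif_pos (φ_le k hk r m)]
    exact congrArg _ (Subtype.ext (φ_div k hk hr m))
  apply lp.ext; funext i
  rw [show (Dop k hk hq D (Top k hk hq g) : PN → ℝ) i
      = Dop k hk hq D (Top k hk hq g) i from rfl]
  rw [Dop_apply]
  rw [Finset.sum_congr rfl (fun r hr => by
    rw [hTS r (Finset.mem_range.1 hr)])]
  rw [sum_σE k hk (fun _ => ⇑(D g)) i]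
  show Top k hk hq (D g) i = _
  rw [Top_apply]
  by_cases h : k ≤ i.1
  · rw [dif_pos h]
    have hP : (σP k i).elim 0 ⇑(Top k hk hq g) = 0 := by
      unfold σP; rw [if_neg (not_lt.2 h)]; rfl
    rw [hP, zero_add]
  · rw [dif_neg h, add_zero]
    unfold σP
    rw [if_pos (not_le.1 h)]
    show (0:ℝ) = Top k hk hq g i
    rw [Top_apply, dif_neg h]

end S15

/-- For fixed `k ≥ 1`, the operator `T` on `ℓᵖ(ℕ₊)` with `(T f) n = f ⌊n/k⌋` for `n ≥ k`
and `(T f) n = 0` for `n < k` is bounded with `‖T‖ = k^{1/p}`, and preserves majorization. -/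
theorem stmt15 (p : ℝ≥0∞) [Fact (1 ≤ p)] (hp : p ≠ ∞) (k : ℕ) (hk : 0 < k) :
    ∃ T : lp (fun _ : {n : ℕ // 0 < n} => ℝ) p →L[ℝ] lp (fun _ : {n : ℕ // 0 < n} => ℝ) p,
      (∀ (f : lp (fun _ : {n : ℕ // 0 < n} => ℝ) p) (n : {n : ℕ // 0 < n}),
        T f n = if h : k ≤ n.1 then f ⟨n.1 / k, Nat.div_pos h hk⟩ else 0) ∧
      ‖T‖ = (k : ℝ) ^ (1 / p.toReal) ∧ PreservesMajorization T := by
  have hq : 0 < p.toReal :=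
    ENNReal.toReal_pos (zero_lt_one.trans_le (Fact.out : (1:ℝ≥0∞) ≤ p)).ne' hp
  refine ⟨S15.Top k hk hq, fun f n => S15.Top_apply k hk hq f n, S15.Top_opNorm k hk hq, ?_⟩
  rintro f g ⟨D, hD, hfg⟩
  subst hfg
  exact ⟨S15.Dop k hk hq D,
    ⟨⟨S15.Dop_pos k hk hq D hD.1.1, S15.Dop_row k hk hq D hD⟩,
     ⟨S15.Dop_pos k hk hq D hD.1.1, S15.Dop_col k hk hq D hD⟩⟩,
    S15.Top_transport k hk hq D g⟩
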